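/- Let $G$ be a finite group, $K \le Z(G)$, $A$ an abelian group, $\kappa : K \to A$ a faithful homomorphism, and $\alpha \in Z^2(G/K, K)$ a cocycle describing the central extension $1 \to K \to G \to G/K \to 1$. Let $\mu : K \to A$ be any homomorphism that is trivial on $\tilde K := K \cap G'$ (where $G'$ is the derived subgroup). Then the cohomology class $[\mu\circ\alpha] \in H^2(G/K, \mathrm{tor}\,A)$ is trivial, provided every homomorphism from $K/\tilde K$ to $A$ extends to a homomorphism from $G/\tilde K$ to $A$ (which holds e.g. if $A$ is divisible on torsion). -/
import Mathlib


/-- A 2-cocycle condition (for trivial actions). -/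
def IsCocycle {Q B : Type*} [Group Q] [Group B] (α : Q → Q → B) : Prop :=
  ∀ x y z, α x y * α (x * y) z = α y z * α x (y * z)

/-- A cocycle `α ∈ Z²(G/K, K)` describes the central extension `1 → K → G → G/K → 1` if
there is a section `σ` of the quotient map with `σ(x) σ(y) = α(x,y) σ(xy)`. -/
def Describes {G : Type*} [Group G] (K : Subgroup G) [K.Normal]
    (α : G ⧸ K → G ⧸ K → K) : Prop :=
  ∃ σ : G ⧸ K → G, (∀ x, (QuotientGroup.mk (σ x) : G ⧸ K) = x) ∧
    ∀ x y, σ x * σ y = (α x y : G) * σ (x * y)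

/-- Proposition 10.9(b): if `K ≤ Z(G)`, `κ : K → A` is faithful, `α` describes the
central extension `1 → K → G → G/K → 1`, and `μ : K → A` is a homomorphism trivial on
`K̃ = K ∩ G'`, then the class `[μ∘α] ∈ H²(G/K, tor A)` is trivial — provided every
homomorphism `K → A` trivial on `K̃` extends to a homomorphism `G → A`. -/
theorem mu_alpha_coboundary {G A : Type*} [Group G] [Finite G] [CommGroup A]
    (K : Subgroup G) [hKn : K.Normal] (hKc : K ≤ Subgroup.center G)
    (κ : K →* A) (hκinj : Function.Injective κ)
    (α : G ⧸ K → G ⧸ K → K) (hα : IsCocycle α) (hαd : Describes K α)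
    (μ : K →* A)
    (hμtriv : ∀ (x : G) (h1 : x ∈ K), x ∈ commutator G → μ ⟨x, h1⟩ = 1)
    (hext : ∀ ν : K →* A,
      (∀ (x : G) (h1 : x ∈ K), x ∈ commutator G → ν ⟨x, h1⟩ = 1) →
      ∃ ν' : G →* A, ∀ k : K, ν' k = ν k) :
    ∃ m : G ⧸ K → A, (∀ x, m x ∈ CommGroup.torsion A) ∧
      ∀ x y, (μ (α x y) : A) = m x * m y * (m (x * y))⁻¹ := by
  obtain ⟨ν', hν'⟩ := hext μ hμtriv
  obtain ⟨σ, hσ1, hσ2⟩ := hαd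
  refine ⟨fun x => ν' (σ x), fun x => ?_, fun x y => ?_⟩
  · exact ν'.isOfFinOrder (isOfFinOrder_of_finite (σ x))
  · have h := congrArg ν' (hσ2 x y)
    simp only [map_mul] at h
    rw [hν'] at h
    rw [h]; group
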